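/- If J is an upper set in the lattice of flats of a matroid M and x ∈ E, then J\x := {C\{x} : C ∈ J and C = cl(C\{x})} is an upper set in the lattice of flats of the deletion M\x. -/

import Mathlib

open Matroid Set

variable {α : Type*}

/-- Deletion of a single element: restriction to `M.E \ {x}`. -/
def Matroid.deleteElem' (M : Matroid α) (x : α) : Matroid α := M ↾ (M.E \ {x})

/-- Contraction of a single element, defined by duality: `M/x = (M✶ \ x)✶`. -/
def Matroid.contractElem' (M : Matroid α) (x : α) : Matroid α := (M✶.deleteElem' x)✶

/-- The deletion `J\x = {C \ {x} : C ∈ J, C = cl(C \ {x})}` of an upper set `J` in the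
lattice of flats of `M`. -/
def delUpperSet (M : Matroid α) (J : Set (Set α)) (x : α) : Set (Set α) :=
  {F | ∃ C ∈ J, C = M.closure (C \ {x}) ∧ F = C \ {x}}

private lemma restrict_closure_eq' (M : Matroid α) {R X : Set α} (hR : R ⊆ M.E) (hX : X ⊆ R) :
    (M ↾ R).closure X = M.closure X ∩ R := by
  obtain ⟨I, hI⟩ := M.exists_isBasis X (hX.trans hR)
  have hIR : (M ↾ R).IsBasis I X := (isBasis_restrict_iff hR).2 ⟨hI, hX⟩
  rw [← hIR.closure_eq_closure, ← hI.closure_eq_closure]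
  ext e
  simp only [mem_inter_iff, hIR.indep.mem_closure_iff', hI.indep.mem_closure_iff',
    restrict_ground_eq, restrict_indep_iff, insert_subset_iff]
  have hIsub : I ⊆ R := hI.subset.trans hX
  constructor
  · rintro ⟨heR, h⟩
    exact ⟨⟨hR heR, fun hind ↦ h ⟨hind, heR, hIsub⟩⟩, heR⟩
  · rintro ⟨⟨heE, h⟩, heR⟩
    exact ⟨heR, fun hind ↦ h hind.1⟩

private lemma flat_closure' (M : Matroid α) (X : Set α) : M.IsFlat (M.closure X) := by
  refine ⟨fun I Y hI hY ↦ ?_, M.closure_subset_ground X⟩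
  calc Y ⊆ M.closure I := hY.subset_closure
    _ = M.closure (M.closure X) := hI.closure_eq_closure
    _ = M.closure X := M.closure_closure X

/-- If `J` is an upper set in the lattice of flats of `M`, then `J\x` is an upper set in
the lattice of flats of the deletion `M\x`. -/
theorem delUpperSet_isUpperSet (M : Matroid α) (x : α)
    (J : Set (Set α)) (hJflat : ∀ C ∈ J, M.IsFlat C)
    (hJup : ∀ C ∈ J, ∀ C', M.IsFlat C' → C ⊆ C' → C' ∈ J) :
    (∀ F ∈ delUpperSet M J x, (M.deleteElem' x).IsFlat F) ∧
      (∀ F ∈ delUpperSet M J x, ∀ F', (M.deleteElem' x).IsFlat F' → F ⊆ F' →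
        F' ∈ delUpperSet M J x) := by
  have hR : M.E \ {x} ⊆ M.E := diff_subset
  constructor
  · rintro F ⟨C, hCJ, hCcl, rfl⟩
    have hCE : C ⊆ M.E := (hJflat C hCJ).subset_ground
    have hsub : C \ {x} ⊆ M.E \ {x} := diff_subset_diff_left hCE
    refine ⟨fun I Y hI hY ↦ ?_, hsub⟩
    rw [Matroid.deleteElem', isBasis_restrict_iff hR] at hI hY
    have hYC : Y ⊆ C := by
      calc Y ⊆ M.closure I := hY.1.subset_closure
        _ = M.closure (C \ {x}) := hI.1.closure_eq_closure
        _ = C := hCcl.symm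
    exact subset_diff_singleton hYC (fun hx ↦ (hY.2 hx).2 rfl)
  · rintro F ⟨C, hCJ, hCcl, rfl⟩ F' hF' hFF'
    have hF'R : F' ⊆ M.E \ {x} := hF'.subset_ground
    set C' := M.closure F' with hC'
    have hC'flat : M.IsFlat C' := flat_closure' M F'
    have hCC' : C ⊆ C' := by
      rw [hCcl]
      exact M.closure_subset_closure hFF'
    have hF'eq : C' \ {x} = F' := by
      have h1 : C' \ {x} = C' ∩ (M.E \ {x}) := by
        rw [← inter_diff_assoc, inter_eq_self_of_subset_left (M.closure_subset_ground F')]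
      rw [h1, hC', ← restrict_closure_eq' M hR hF'R]
      have hF'' : (M ↾ (M.E \ {x})).IsFlat F' := hF'
      exact hF''.closure
    refine ⟨C', hJup C hCJ C' hC'flat hCC', ?_, hF'eq.symm⟩
    rw [hF'eq]
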